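/- Runtime of the WU algorithm under random failures: let n ≥ 2, let c > 1 be a real constant, and let p ∈ (0,1). Then μ_p { b : ℕ → Bool | (c/p)·(⌈log₂(n−1)⌉ + 1) < (HWU (n−1) b : ℕ∞) } ≤ n · exp( − ((c−1)²/(2c)) · (⌈log₂(n−1)⌉ − 1) ). That is, with probability at least 1 − n·exp(−((c−1)²/(2c))(⌈log₂(n−1)⌉−1)), the WU algorithm with success rate p delivers the rumor to all n processors within (c/p)(⌈log₂(n−1)⌉+1) rounds. -/

import Mathlib

def oddSeq (b : ℕ → Bool) : ℕ → Bool := fun i => b (2*i)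
def evenSeq (b : ℕ → Bool) : ℕ → Bool := fun i => b (2*i+1)

/-- Time complexity of the WU (wakeup) algorithm with `n` uninformed processors
under failure pattern `b`, valued in the extended naturals. -/
noncomputable def HWU : ℕ → (ℕ → Bool) → ℕ∞
  | 0, _ => 0
  | n+1, b =>
    have : Decidable (∃ k, b k = true) := Classical.propDecidable _
    if h : ∃ k, b k = true then
      ((Nat.find h + 1 : ℕ) : ℕ∞) +
        max (HWU ((n+1)/2) (oddSeq (fun i => b (i + Nat.find h + 1))))
            (HWU (n/2) (evenSeq (fun i => b (i + Nat.find h + 1))))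
    else ⊤
decreasing_by all_goals omega

open MeasureTheory ENNReal

lemma HWU_succ (m k : ℕ) (b : ℕ → Bool) (hk : b k = true) (hlt : ∀ i < k, b i = false) :
    HWU (m+1) b = ((k+1 : ℕ) : ℕ∞) +
      max (HWU ((m+1)/2) (fun j => b (2*j + (k+1)))) (HWU (m/2) (fun j => b (2*j+1 + (k+1)))) := by
  have h : ∃ k, b k = true := ⟨k, hk⟩
  rw [HWU]
  rw [dif_pos h]
  have hf : Nat.find h = k := by
    rw [Nat.find_eq_iff]
    exact ⟨hk, fun j hj => by simp [hlt j hj]⟩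
  have e1 : oddSeq (fun i => b (i + Nat.find h + 1)) = fun j => b (2*j + (k+1)) := by
    funext j; simp only [oddSeq, hf]; exact congrArg b (by omega)
  have e2 : evenSeq (fun i => b (i + Nat.find h + 1)) = fun j => b (2*j+1 + (k+1)) := by
    funext j; simp only [evenSeq, hf]; exact congrArg b (by omega)
  rw [e1, e2, hf]

lemma HWU_none (m : ℕ) (b : ℕ → Bool) (hb : ∀ k, b k = false) : HWU (m+1) b = ⊤ := by
  rw [HWU, dif_neg]; push_neg; simp [hb]

open MeasureTheory ENNReal

def Cyl : Set (Set (ℕ → Bool)) :=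
  {S | ∃ (s : Finset ℕ) (v : ℕ → Bool), S = {b | ∀ i ∈ s, b i = v i}}

lemma measurableSet_cylSet (s : Finset ℕ) (v : ℕ → Bool) :
    MeasurableSet {b : ℕ → Bool | ∀ i ∈ s, b i = v i} := by
  have : {b : ℕ → Bool | ∀ i ∈ s, b i = v i} = ⋂ i ∈ (s : Set ℕ), (fun b : ℕ → Bool => b i) ⁻¹' {v i} := by
    ext b; simp
  rw [this]
  exact MeasurableSet.biInter s.countable_toSet fun i _ => (measurable_pi_apply i) trivial

lemma isPiSystem_Cyl : IsPiSystem Cyl := by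
  rintro _ ⟨s, v, rfl⟩ _ ⟨s', v', rfl⟩ hne
  obtain ⟨b0, hb01, hb02⟩ := hne
  refine ⟨s ∪ s', fun i => if i ∈ s then v i else v' i, ?_⟩
  ext b
  simp only [Set.mem_inter_iff, Set.mem_setOf_eq, Finset.mem_union]
  constructor
  · rintro ⟨h1, h2⟩ i hi
    by_cases h : i ∈ s
    · simp [h, h1 i h]
    · rcases hi with hi | hi
      · exact absurd hi h
      · simp [h, h2 i hi]
  · intro h
    constructor
    · intro i hi
      have := h i (Or.inl hi); simpa [hi] using this
    · intro i hi
      have := h i (Or.inr hi)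
      by_cases hs : i ∈ s
      · rw [if_pos hs] at this
        rw [this, ← hb01 i hs, hb02 i hi]
      · simpa [hs] using this

lemma generateFrom_Cyl :
    (inferInstance : MeasurableSpace (ℕ → Bool)) = MeasurableSpace.generateFrom Cyl := by
  refine le_antisymm ?_ ?_
  · show MeasurableSpace.pi ≤ _
    refine iSup_le fun i => ?_
    rw [← measurable_iff_comap_le]
    intro S _
    classical
    have : (fun b : ℕ → Bool => b i) ⁻¹' S =
        (if true ∈ S then {b : ℕ → Bool | b i = true} else ∅) ∪
        (if false ∈ S then {b : ℕ → Bool | b i = false} else ∅) := by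
      ext b; cases hb : b i <;> by_cases h1 : true ∈ S <;> by_cases h2 : false ∈ S <;>
        simp [hb, h1, h2, Set.mem_preimage]
    rw [this]
    have ht : ∀ u : Bool, MeasurableSet[MeasurableSpace.generateFrom Cyl] {b : ℕ → Bool | b i = u} :=
      fun u => MeasurableSpace.measurableSet_generateFrom ⟨{i}, fun _ => u, by ext b; simp⟩
    refine @MeasurableSet.union _ (MeasurableSpace.generateFrom Cyl) _ _ ?_ ?_ <;> split_ifs <;>
      first | exact ht _ | exact @MeasurableSet.empty _ (MeasurableSpace.generateFrom Cyl)
  · refine MeasurableSpace.generateFrom_le ?_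
    rintro _ ⟨s, v, rfl⟩
    exact measurableSet_cylSet s v

def IsBern (p : ℝ) (μ : Measure (ℕ → Bool)) : Prop :=
  ∀ (s : Finset ℕ) (v : ℕ → Bool),
    μ {b | ∀ i ∈ s, b i = v i} =
      ∏ i ∈ s, (if v i then ENNReal.ofReal p else ENNReal.ofReal (1 - p))

lemma measurable_remap (f : ℕ → ℕ) : Measurable (fun (b : ℕ → Bool) (j : ℕ) => b (f j)) :=
  measurable_pi_iff.mpr fun j => measurable_pi_apply (f j)

lemma remap_preimage_cyl (f : ℕ → ℕ) (hf : Function.Injective f) (s : Finset ℕ) (v : ℕ → Bool) :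
    (fun (b : ℕ → Bool) (j : ℕ) => b (f j)) ⁻¹' {b | ∀ i ∈ s, b i = v i} =
      {b : ℕ → Bool | ∀ i ∈ s.image f, b i = v (Function.invFun f i)} := by
  ext b
  simp only [Set.mem_preimage, Set.mem_setOf_eq, Finset.mem_image]
  constructor
  · rintro h i ⟨j, hj, rfl⟩
    rw [Function.leftInverse_invFun hf j]
    exact h j hj
  · intro h j hj
    have := h (f j) ⟨j, hj, rfl⟩
    rwa [Function.leftInverse_invFun hf j] at this

lemma isBern_map {p : ℝ} {μ : Measure (ℕ → Bool)} (hμ : IsBern p μ)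
    (f : ℕ → ℕ) (hf : Function.Injective f) :
    IsBern p (μ.map (fun (b : ℕ → Bool) (j : ℕ) => b (f j))) := by
  intro s v
  rw [Measure.map_apply (measurable_remap f) (measurableSet_cylSet s v),
    remap_preimage_cyl f hf s v, hμ, Finset.prod_image (fun j _ j' _ h => hf h)]
  refine Finset.prod_congr rfl fun j _ => ?_
  rw [Function.leftInverse_invFun hf j]

def firstT (k : ℕ) : Set (ℕ → Bool) := {b | b k = true ∧ ∀ i < k, b i = false}

lemma firstT_eq_cyl (k : ℕ) :
    firstT k = {b : ℕ → Bool | ∀ i ∈ Finset.range (k+1), b i = decide (i = k)} := by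
  ext b
  simp only [firstT, Set.mem_setOf_eq, Finset.mem_range]
  constructor
  · rintro ⟨h1, h2⟩ i hi
    rcases Nat.lt_succ_iff_lt_or_eq.mp hi with h | h
    · simp [h2 i h, Nat.ne_of_lt h]
    · simp [h, h1]
  · intro h
    refine ⟨by simpa using h k (Nat.lt_succ_self k), fun i hi => by
      simpa [Nat.ne_of_lt hi] using h i (Nat.lt_succ_of_lt hi)⟩

lemma measurableSet_firstT (k : ℕ) : MeasurableSet (firstT k) := by
  rw [firstT_eq_cyl]; exact measurableSet_cylSet _ _

lemma measure_firstT {p : ℝ} {μ : Measure (ℕ → Bool)} (hμ : IsBern p μ) (k : ℕ) :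
    μ (firstT k) = ENNReal.ofReal p * (ENNReal.ofReal (1 - p))^k := by
  rw [firstT_eq_cyl, hμ, Finset.prod_range_succ]
  have : ∀ i ∈ Finset.range k, (if decide (i = k) = true then ENNReal.ofReal p
      else ENNReal.ofReal (1 - p)) = ENNReal.ofReal (1 - p) := fun i hi => by
    simp [Nat.ne_of_lt (Finset.mem_range.mp hi)]
  rw [Finset.prod_congr rfl this, Finset.prod_const, Finset.card_range]
  simp [mul_comm]

lemma bern_split {p : ℝ} {μ : Measure (ℕ → Bool)} [IsProbabilityMeasure μ] (hμ : IsBern p μ)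
    (k : ℕ) (f : ℕ → ℕ) (hf : Function.Injective f) (hfk : ∀ j, k < f j)
    (B : Set (ℕ → Bool)) (hB : MeasurableSet B) :
    μ (firstT k ∩ (fun (b : ℕ → Bool) (j : ℕ) => b (f j)) ⁻¹' B) =
      μ (firstT k) * (μ.map (fun (b : ℕ → Bool) (j : ℕ) => b (f j))) B := by
  classical
  set g := fun (b : ℕ → Bool) (j : ℕ) => b (f j) with hg
  have hmg : Measurable g := measurable_remap f
  have key : (μ.restrict (firstT k)).map g = μ (firstT k) • μ.map g := by
    haveI : IsFiniteMeasure ((μ.restrict (firstT k)).map g) := by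
      refine Measure.isFiniteMeasure_map _ _
    haveI : IsFiniteMeasure (μ (firstT k) • μ.map g) := by
      refine Measure.smul_finite _ (measure_ne_top _ _)
    refine ext_of_generate_finite Cyl generateFrom_Cyl isPiSystem_Cyl ?_ ?_
    · rintro _ ⟨s, v, rfl⟩
      rw [Measure.map_apply hmg (measurableSet_cylSet s v),
        Measure.restrict_apply (hmg (measurableSet_cylSet s v)),
        remap_preimage_cyl f hf s v]
      have hset : {b : ℕ → Bool | ∀ i ∈ s.image f, b i = v (Function.invFun f i)} ∩ firstT k =
          {b : ℕ → Bool | ∀ i ∈ Finset.range (k+1) ∪ s.image f, b i =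
            (if i ≤ k then decide (i = k) else v (Function.invFun f i))} := by
        ext b
        simp only [Set.mem_inter_iff, Set.mem_setOf_eq, Finset.mem_union, Finset.mem_range,
          firstT, Finset.mem_image]
        constructor
        · rintro ⟨h1, h2, h3⟩ i hi
          rcases hi with hi | hi
          · rcases Nat.lt_succ_iff_lt_or_eq.mp hi with h | h
            · simp [h3 i h, Nat.ne_of_lt h, Nat.le_of_lt h]
            · simp [h, h2]
          · obtain ⟨j, hj, rfl⟩ := hi
            rw [if_neg (by exact Nat.not_le.mpr (hfk j))]
            exact h1 (f j) ⟨j, hj, rfl⟩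
        · intro h
          refine ⟨?_, ?_, ?_⟩
          · rintro i ⟨j, hj, rfl⟩
            have := h (f j) (Or.inr ⟨j, hj, rfl⟩)
            rwa [if_neg (Nat.not_le.mpr (hfk j))] at this
          · have := h k (Or.inl (Nat.lt_succ_self k))
            simpa using this
          · intro i hi
            have := h i (Or.inl (Nat.lt_succ_of_lt hi))
            simpa [Nat.le_of_lt hi, Nat.ne_of_lt hi] using this
      rw [hset, hμ]
      have hdisj : Disjoint (Finset.range (k+1)) (s.image f) := by
        rw [Finset.disjoint_left]
        rintro x hx hx'
        obtain ⟨j, _, rfl⟩ := Finset.mem_image.mp hx'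
        exact absurd (Finset.mem_range.mp hx) (by have := hfk j; omega)
      rw [Finset.prod_union hdisj]
      have e1 : ∏ i ∈ Finset.range (k+1), (if (if i ≤ k then decide (i = k)
            else v (Function.invFun f i)) = true then ENNReal.ofReal p else ENNReal.ofReal (1-p))
          = μ (firstT k) := by
        rw [firstT_eq_cyl, hμ]
        refine Finset.prod_congr rfl fun i hi => ?_
        rw [if_pos (Nat.lt_succ_iff.mp (Finset.mem_range.mp hi))]
      have e2 : ∏ i ∈ s.image f, (if (if i ≤ k then decide (i = k)
            else v (Function.invFun f i)) = true then ENNReal.ofReal p else ENNReal.ofReal (1-p))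
          = (μ.map g) {b | ∀ i ∈ s, b i = v i} := by
        rw [isBern_map hμ f hf s v]
        rw [Finset.prod_image (fun j _ j' _ h => hf h)]
        refine Finset.prod_congr rfl fun j _ => ?_
        rw [if_neg (Nat.not_le.mpr (hfk j)), Function.leftInverse_invFun hf j]
      rw [e1, e2, Measure.smul_apply, smul_eq_mul]
    · rw [Measure.map_apply hmg MeasurableSet.univ, Set.preimage_univ,
        Measure.restrict_apply_univ, Measure.smul_apply, Measure.map_apply hmg MeasurableSet.univ,
        Set.preimage_univ, measure_univ, smul_eq_mul, mul_one]
  calc μ (firstT k ∩ g ⁻¹' B) = μ (g ⁻¹' B ∩ firstT k) := by rw [Set.inter_comm]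
    _ = (μ.restrict (firstT k)) (g ⁻¹' B) := (Measure.restrict_apply (hmg hB)).symm
    _ = ((μ.restrict (firstT k)).map g) B := (Measure.map_apply hmg hB).symm
    _ = μ (firstT k) * (μ.map g) B := by rw [key, Measure.smul_apply, smul_eq_mul]

lemma HWU_gt_set_eq (m t : ℕ) : {b : ℕ → Bool | (t:ℕ∞) < HWU (m+1) b} =
    {b : ℕ → Bool | ∀ k, b k = false} ∪
    ⋃ k, (firstT k ∩ (if k + 1 ≤ t then
        ((fun (b : ℕ → Bool) (j : ℕ) => b (2*j + (k+1))) ⁻¹'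
            {b | ((t - (k+1) : ℕ) : ℕ∞) < HWU ((m+1)/2) b} ∪
         (fun (b : ℕ → Bool) (j : ℕ) => b (2*j+1 + (k+1))) ⁻¹'
            {b | ((t - (k+1) : ℕ) : ℕ∞) < HWU (m/2) b})
      else Set.univ)) := by
  ext b
  simp only [Set.mem_setOf_eq, Set.mem_union, Set.mem_iUnion]
  by_cases hex : ∃ j, b j = true
  · have hk : b (Nat.find hex) = true := Nat.find_spec hex
    set k := Nat.find hex with hkdef
    have hlt : ∀ i < k, b i = false := fun i hi => by
      simpa using Nat.find_min hex hi
    rw [HWU_succ m k b hk hlt]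
    constructor
    · intro hlt2
      refine Or.inr ⟨k, ⟨hk, hlt⟩, ?_⟩
      by_cases hkt : k + 1 ≤ t
      · rw [if_pos hkt]
        have hmax : ((t - (k+1) : ℕ) : ℕ∞) <
            max (HWU ((m+1)/2) (fun j => b (2*j + (k+1)))) (HWU (m/2) (fun j => b (2*j+1 + (k+1)))) := by
          have ht' : (t:ℕ∞) = ((k+1:ℕ):ℕ∞) + ((t - (k+1):ℕ):ℕ∞) := by
            rw [← Nat.cast_add]; congr 1; omega
          rw [ht'] at hlt2
          exact lt_of_add_lt_add_left hlt2
        rcases lt_max_iff.mp hmax with h | h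
        · exact Or.inl h
        · exact Or.inr h
      · rw [if_neg hkt]; trivial
    · rintro (hall | ⟨k', ⟨hk', hlt'⟩, hmem⟩)
      · rw [hall k] at hk; exact absurd hk (by simp)
      · have hkk : k' = k := by
          have h1 : k ≤ k' := Nat.find_min' hex hk'
          rcases Nat.lt_or_ge k k' with h | h
          · rw [hlt' k h] at hk; exact absurd hk (by simp)
          · omega
        subst hkk
        by_cases hkt : k + 1 ≤ t
        · rw [if_pos hkt] at hmem
          have hmax : ((t - (k+1) : ℕ) : ℕ∞) <
              max (HWU ((m+1)/2) (fun j => b (2*j + (k+1)))) (HWU (m/2) (fun j => b (2*j+1 + (k+1)))) := by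
            rcases hmem with h | h
            · exact lt_max_iff.mpr (Or.inl h)
            · exact lt_max_iff.mpr (Or.inr h)
          have ht' : (t:ℕ∞) = ((k+1:ℕ):ℕ∞) + ((t - (k+1):ℕ):ℕ∞) := by
            rw [← Nat.cast_add]; congr 1; omega
          rw [ht']
          exact WithTop.add_lt_add_left (by exact_mod_cast ENat.coe_ne_top (k+1)) hmax
        · have h1 : (t:ℕ∞) < ((k+1:ℕ):ℕ∞) := by
            rw [Nat.cast_lt]; omega
          exact lt_of_lt_of_le h1 le_self_add
  · have hb : ∀ j, b j = false := fun j => by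
      have := fun h => hex ⟨j, h⟩
      simpa using this
    rw [HWU_none m b hb]
    simp [hb]

lemma measurableSet_HWU_gt (m : ℕ) : ∀ (t : ℕ), MeasurableSet {b : ℕ → Bool | (t:ℕ∞) < HWU m b} := by
  induction m using Nat.strong_induction_on with
  | _ m ih =>
    intro t
    match m with
    | 0 =>
      have : {b : ℕ → Bool | (t:ℕ∞) < HWU 0 b} = ∅ := by
        ext b; simp [HWU]
      rw [this]; exact MeasurableSet.empty
    | Nat.succ m =>
      rw [HWU_gt_set_eq]
      refine MeasurableSet.union ?_ (MeasurableSet.iUnion fun k => ?_)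
      · have : {b : ℕ → Bool | ∀ k, b k = false} = ⋂ k, (fun b : ℕ → Bool => b k) ⁻¹' {false} := by
          ext b; simp
        rw [this]
        exact MeasurableSet.iInter fun k => (measurable_pi_apply k) trivial
      · refine (measurableSet_firstT k).inter ?_
        split_ifs
        · exact ((measurable_remap _) (ih ((m+1)/2) (by omega) _)).union
            ((measurable_remap _) (ih (m/2) (by omega) _))
        · exact MeasurableSet.univ

noncomputable def qf (p : ℝ) : ℕ → ℕ → ℝ
  | 0, _ => 0
  | d+1, t => (∑ k ∈ Finset.range t, p * (1-p)^k * qf p d (t-1-k)) + (1-p)^t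

lemma qf_nonneg {p : ℝ} (hp0 : 0 < p) (hp1 : p < 1) : ∀ d t, 0 ≤ qf p d t := by
  have hA : (0:ℝ) ≤ 1 - p := by linarith
  intro d
  induction d with
  | zero => intro t; rw [qf]
  | succ d ih =>
    intro t; rw [qf]
    have h1 : (0:ℝ) ≤ ∑ k ∈ Finset.range t, p * (1-p)^k * qf p d (t-1-k) :=
      Finset.sum_nonneg fun k _ =>
        mul_nonneg (mul_nonneg hp0.le (pow_nonneg hA k)) (ih (t-1-k))
    exact add_nonneg h1 (pow_nonneg hA t)

lemma qf_mono_d {p : ℝ} (hp0 : 0 < p) (hp1 : p < 1) : ∀ d t, qf p d t ≤ qf p (d+1) t := by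
  intro d
  induction d with
  | zero => intro t; rw [qf]; exact qf_nonneg hp0 hp1 1 t
  | succ d ih =>
    intro t
    rw [qf, qf]
    refine add_le_add_left (Finset.sum_le_sum fun k _ => ?_) _
    have h1 : qf p d (t-1-k) ≤ qf p (d+1) (t-1-k) := ih _
    have h2 : (0:ℝ) ≤ p * (1-p)^k := mul_nonneg hp0.le (pow_nonneg (by linarith) k)
    nlinarith




lemma qf_le_chernoff {p : ℝ} (hp0 : 0 < p) (hp1 : p < 1) (s : ℝ) (hs0 : 0 < s) (hs1 : s ≤ 1) :
    ∀ d t, qf p d t ≤ s ^ ((1:ℤ) - d) * (1 - p + p*s)^t := by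
  have hB0 : (0:ℝ) < 1 - p + p*s := by nlinarith
  have hA0 : (0:ℝ) ≤ 1 - p := by linarith
  intro d
  induction d with
  | zero => intro t; rw [qf]; positivity
  | succ d ih =>
    intro t
    rw [qf]
    have hKnn : (0:ℝ) < s ^ (-(d:ℤ)) := zpow_pos hs0 _
    have hK1 : (1:ℝ) ≤ s ^ (-(d:ℤ)) := by
      rw [zpow_neg, zpow_natCast]
      exact (one_le_inv₀ (pow_pos hs0 d)).mpr (pow_le_one₀ hs0.le hs1)
    have hgeom : (∑ k ∈ Finset.range t, (1-p)^k * (1-p+p*s)^(t-1-k)) * ((1-p) - (1-p+p*s))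
        = (1-p)^t - (1-p+p*s)^t := geom_sum₂_mul (1-p) (1-p+p*s) t
    have hgeom' : p * s * (∑ k ∈ Finset.range t, (1-p)^k * (1-p+p*s)^(t-1-k))
        = (1-p+p*s)^t - (1-p)^t := by nlinarith [hgeom]
    have hexp : s ^ ((1:ℤ) - (d+1:ℕ)) = s ^ (-(d:ℤ)) := by
      congr 1; push_cast; ring
    rw [hexp]
    have step : ∑ k ∈ Finset.range t, p * (1-p)^k * qf p d (t-1-k)
        ≤ ∑ k ∈ Finset.range t, p * (1-p)^k * (s ^ ((1:ℤ) - d) * (1-p+p*s)^(t-1-k)) := by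
      refine Finset.sum_le_sum fun k _ => ?_
      have h2 : (0:ℝ) ≤ p * (1-p)^k := by positivity
      have := ih (t-1-k)
      nlinarith
    have hsum : ∑ k ∈ Finset.range t, p * (1-p)^k * (s ^ ((1:ℤ) - d) * (1-p+p*s)^(t-1-k))
        = s ^ (-(d:ℤ)) * (p * s * ∑ k ∈ Finset.range t, (1-p)^k * (1-p+p*s)^(t-1-k)) := by
      rw [Finset.mul_sum, Finset.mul_sum]
      refine Finset.sum_congr rfl fun k _ => ?_
      have hzz : s ^ ((1:ℤ) - d) = s * s ^ (-(d:ℤ)) := by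
        rw [sub_eq_add_neg, zpow_add₀ (ne_of_gt hs0), zpow_one]
      rw [hzz]; ring
    calc (∑ k ∈ Finset.range t, p * (1-p)^k * qf p d (t-1-k)) + (1-p)^t
        ≤ (∑ k ∈ Finset.range t, p * (1-p)^k * (s ^ ((1:ℤ) - d) * (1-p+p*s)^(t-1-k))) + (1-p)^t :=
          add_le_add_left step _
      _ = s ^ (-(d:ℤ)) * ((1-p+p*s)^t - (1-p)^t) + (1-p)^t := by rw [hsum, hgeom']
      _ ≤ s ^ (-(d:ℤ)) * (1-p+p*s)^t := by nlinarith [pow_nonneg hA0 t]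

lemma log_le_half_sub_inv {c : ℝ} (hc : 1 ≤ c) : Real.log c ≤ (c - c⁻¹)/2 := by
  have key : MonotoneOn (fun x : ℝ => (x - x⁻¹)/2 - Real.log x) (Set.Ici 1) := by
    have hderiv : ∀ x ∈ interior (Set.Ici (1:ℝ)), HasDerivAt (fun x : ℝ => (x - x⁻¹)/2 - Real.log x)
        ((1 - -(x^2)⁻¹)/2 - x⁻¹) x := by
      intro x hx
      rw [interior_Ici] at hx
      have hx0 : x ≠ 0 := by have : (1:ℝ) < x := hx; positivity
      exact (((hasDerivAt_id x).sub (hasDerivAt_inv hx0)).div_const 2).sub (Real.hasDerivAt_log hx0)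
    refine StrictMonoOn.monotoneOn ?_
    refine strictMonoOn_of_hasDerivWithinAt_pos (convex_Ici 1) ?_
      (fun x hx => ((hderiv x hx).hasDerivWithinAt)) ?_
    · have : ∀ x ∈ Set.Ici (1:ℝ), x ≠ 0 := fun x hx => by
        have : (1:ℝ) ≤ x := hx; positivity
      exact ContinuousOn.sub
        ((continuousOn_id.sub (continuousOn_inv₀.mono (fun x hx => this x hx))).div_const 2)
        (Real.continuousOn_log.mono (fun x hx => this x hx))
    · intro x hx
      rw [interior_Ici] at hx
      have h1 : (1:ℝ) < x := hx
      have hx0 : (0:ℝ) < x := by linarith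
      have e : (1 - -(x^2)⁻¹)/2 - x⁻¹ = (x^2 - 2*x + 1)/(2*x^2) := by field_simp; ring
      rw [e]
      apply div_pos (by nlinarith) (by positivity)
  have h := key (Set.mem_Ici.mpr le_rfl) (Set.mem_Ici.mpr hc) hc
  norm_num at h
  linarith

lemma qf_final_bound {p : ℝ} (hp0 : 0 < p) (hp1 : p < 1) {c : ℝ} (hc : 1 < c)
    (D t : ℕ) (hD : 1 ≤ D) (ht : (c/p) * D - 1 ≤ t) :
    qf p D t ≤ Real.exp (-((c-1)^2/(2*c)) * ((D:ℝ) - 2)) := by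
  have hc0 : (0:ℝ) < c := by linarith
  have hs0 : (0:ℝ) < c⁻¹ := by positivity
  have hs1 : c⁻¹ ≤ 1 := by rw [inv_le_one_iff₀]; right; linarith
  have h1 := qf_le_chernoff hp0 hp1 c⁻¹ hs0 hs1 D t
  have hzp : (c⁻¹) ^ ((1:ℤ) - D) = c ^ (D - 1 : ℕ) := by
    rw [inv_zpow, ← zpow_neg, show -((1:ℤ) - D) = ((D - 1 : ℕ) : ℤ) by push_cast [hD]; omega,
      zpow_natCast]
  have hpow : c ^ (D - 1 : ℕ) = Real.exp (((D:ℝ) - 1) * Real.log c) := by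
    conv_lhs => rw [← Real.exp_log hc0]
    rw [← Real.exp_nat_mul]
    congr 1
    rw [Nat.cast_sub hD]; push_cast; ring
  have hpc : (0:ℝ) < p * c⁻¹ := by positivity
  have hbase0 : (0:ℝ) ≤ 1 - p + p * c⁻¹ := by linarith
  have hbase : 1 - p + p * c⁻¹ ≤ Real.exp (p * c⁻¹ - p) := by
    have := Real.add_one_le_exp (p * c⁻¹ - p); linarith
  have hpowt : (1 - p + p*c⁻¹)^t ≤ Real.exp ((p * c⁻¹ - p) * t) := by
    calc (1-p+p*c⁻¹)^t ≤ (Real.exp (p*c⁻¹ - p))^t := pow_le_pow_left₀ hbase0 hbase t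
      _ = Real.exp ((p*c⁻¹-p)*t) := by rw [← Real.exp_nat_mul]; ring_nf
  have hexpnn : (0:ℝ) < Real.exp (((D:ℝ) - 1) * Real.log c) := Real.exp_pos _
  have hmain : qf p D t ≤ Real.exp (((D:ℝ)-1) * Real.log c + (p*c⁻¹ - p)*t) := by
    rw [Real.exp_add]
    calc qf p D t ≤ (c⁻¹) ^ ((1:ℤ) - D) * (1 - p + p*c⁻¹)^t := h1
      _ = Real.exp (((D:ℝ)-1) * Real.log c) * (1 - p + p*c⁻¹)^t := by rw [hzp, hpow]
      _ ≤ Real.exp (((D:ℝ)-1) * Real.log c) * Real.exp ((p*c⁻¹-p)*t) :=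
          mul_le_mul_of_nonneg_left hpowt hexpnn.le
  refine hmain.trans (Real.exp_le_exp.mpr ?_)
  have hlog := log_le_half_sub_inv hc.le
  have hD1 : (0:ℝ) ≤ (D:ℝ) - 1 := by
    have : (1:ℝ) ≤ (D:ℝ) := by exact_mod_cast hD
    linarith
  have htp : c * ((D:ℝ) - 1) ≤ (t:ℝ) * p := by
    have h' : (c/p) * D - 1 ≤ (t:ℝ) := ht
    have h'' : ((c/p) * D - 1) * p ≤ (t:ℝ) * p := mul_le_mul_of_nonneg_right h' hp0.le
    have e : ((c/p) * D - 1) * p = c * D - p := by field_simp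
    rw [e] at h''
    nlinarith
  have hneg : c⁻¹ - 1 ≤ 0 := by linarith
  have h2 : (p*c⁻¹ - p)*t ≤ ((D:ℝ)-1)*(1-c) := by
    have hmul : ((t:ℝ)*p) * (c⁻¹ - 1) ≤ (c*((D:ℝ)-1)) * (c⁻¹ - 1) :=
      mul_le_mul_of_nonpos_right htp hneg
    calc (p*c⁻¹ - p)*t = ((t:ℝ)*p)*(c⁻¹-1) := by ring
      _ ≤ (c*((D:ℝ)-1))*(c⁻¹-1) := hmul
      _ = ((D:ℝ)-1)*(1-c) := by field_simp
  have h3 : Real.log c - (c-1) ≤ -((c-1)^2/(2*c)) := by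
    have e : (c - c⁻¹)/2 - (c-1) = -((c-1)^2/(2*c)) := by field_simp; ring
    linarith
  have hK : (0:ℝ) ≤ (c-1)^2/(2*c) := by positivity
  calc ((D:ℝ)-1) * Real.log c + (p*c⁻¹ - p)*t ≤ ((D:ℝ)-1)*(Real.log c) + ((D:ℝ)-1)*(1-c) := by
        linarith
    _ = ((D:ℝ)-1)*(Real.log c - (c-1)) := by ring
    _ ≤ ((D:ℝ)-1)*(-((c-1)^2/(2*c))) := mul_le_mul_of_nonneg_left h3 hD1
    _ ≤ -((c-1)^2/(2*c)) * ((D:ℝ)-2) := by nlinarith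

lemma qf_le_of_le {p : ℝ} (hp0 : 0 < p) (hp1 : p < 1) {d d' : ℕ} (h : d ≤ d') (t : ℕ) :
    qf p d t ≤ qf p d' t := by
  induction d', h using Nat.le_induction with
  | base => exact le_rfl
  | succ d' hd ihd => exact ihd.trans (qf_mono_d hp0 hp1 d' t)

lemma HWU_tail_bound {p : ℝ} (hp0 : 0 < p) (hp1 : p < 1) :
    ∀ (m : ℕ) (μ : Measure (ℕ → Bool)), IsProbabilityMeasure μ → IsBern p μ → ∀ t : ℕ,
      μ {b | ((t:ℕ) : ℕ∞) < HWU m b} ≤ ENNReal.ofReal ((m:ℝ) * qf p (Nat.clog 2 (m+1)) t) := by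
  have hA : (0:ℝ) ≤ 1 - p := by linarith
  intro m
  induction m using Nat.strong_induction_on with
  | _ m ih =>
    intro μ hprob hμ t
    match m with
    | 0 =>
      have he : {b : ℕ → Bool | ((t:ℕ) : ℕ∞) < HWU 0 b} = ∅ := by
        ext b; simp [HWU]
      rw [he]
      simp
    | Nat.succ m =>
      haveI := hprob
      have hD1 : 1 ≤ Nat.clog 2 (m+2) := Nat.clog_pos one_lt_two (by omega)
      set D := Nat.clog 2 (m+2) with hDdef
      set d' := D - 1 with hd'def
      have hDd : d' + 1 = D := by omega
      have hsplitlog : Nat.clog 2 (m+2) = Nat.clog 2 ((m+3)/2) + 1 := by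
        rw [Nat.clog_of_two_le one_lt_two (by omega)]
        have e : (m+2+2-1)/2 = (m+3)/2 := by omega
        rw [e]
      have hclog1 : Nat.clog 2 ((m+1)/2 + 1) ≤ d' := by
        have h2 : Nat.clog 2 ((m+1)/2 + 1) ≤ Nat.clog 2 ((m+3)/2) :=
          Nat.clog_mono_right _ (by omega)
        omega
      have hclog2 : Nat.clog 2 (m/2 + 1) ≤ d' := by
        have h2 : Nat.clog 2 (m/2 + 1) ≤ Nat.clog 2 ((m+3)/2) :=
          Nat.clog_mono_right _ (by omega)
        omega
      have hnull : μ {b : ℕ → Bool | ∀ k, b k = false} = 0 := by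
        have hb : ∀ N : ℕ, μ {b : ℕ → Bool | ∀ k, b k = false} ≤ (ENNReal.ofReal (1-p))^N := by
          intro N
          have hsub : {b : ℕ → Bool | ∀ k, b k = false} ⊆
              {b : ℕ → Bool | ∀ i ∈ Finset.range N, b i = (fun _ => false) i} :=
            fun b hb i _ => hb i
          refine (measure_mono hsub).trans ?_
          rw [hμ]
          simp
        have hlim : Filter.Tendsto (fun N => (ENNReal.ofReal (1-p))^N) Filter.atTop (nhds 0) :=
          ENNReal.tendsto_pow_atTop_nhds_zero_of_lt_one (ENNReal.ofReal_lt_one.mpr (by linarith))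
        exact le_antisymm (ge_of_tendsto hlim (Filter.Eventually.of_forall hb)) zero_le
      set B : ℕ → ℝ≥0∞ := fun k => if k + 1 ≤ t then
          ENNReal.ofReal (p * (1-p)^k * ((m:ℝ) * qf p d' (t-1-k)))
        else ENNReal.ofReal (p * (1-p)^k) with hBdef
      have hterm : ∀ k : ℕ, μ (firstT k ∩ (if k + 1 ≤ t then
          ((fun (b : ℕ → Bool) (j : ℕ) => b (2*j + (k+1))) ⁻¹'
              {b | ((t - (k+1) : ℕ) : ℕ∞) < HWU ((m+1)/2) b} ∪
           (fun (b : ℕ → Bool) (j : ℕ) => b (2*j+1 + (k+1))) ⁻¹'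
              {b | ((t - (k+1) : ℕ) : ℕ∞) < HWU (m/2) b})
        else Set.univ)) ≤ B k := by
        intro k
        have e0 : μ (firstT k) = ENNReal.ofReal (p * (1-p)^k) := by
          rw [measure_firstT hμ, ← ENNReal.ofReal_pow hA, ← ENNReal.ofReal_mul hp0.le]
        by_cases hkt : k + 1 ≤ t
        · rw [if_pos hkt, hBdef]
          simp only [if_pos hkt]
          rw [Set.inter_union_distrib_left]
          refine (measure_union_le _ _).trans ?_
          have hf1 : Function.Injective (fun j : ℕ => 2*j + (k+1)) := by
            intro a b h; dsimp only at h; omega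
          have hf2 : Function.Injective (fun j : ℕ => 2*j+1 + (k+1)) := by
            intro a b h; dsimp only at h; omega
          have hs1 := bern_split hμ k _ hf1 (fun j => by omega) _
            (measurableSet_HWU_gt ((m+1)/2) (t-(k+1)))
          have hs2 := bern_split hμ k _ hf2 (fun j => by omega) _
            (measurableSet_HWU_gt (m/2) (t-(k+1)))
          haveI i1 : IsProbabilityMeasure
              (μ.map (fun (b : ℕ → Bool) (j:ℕ) => b (2*j + (k+1)))) :=
            Measure.isProbabilityMeasure_map (measurable_remap _).aemeasurable
          haveI i2 : IsProbabilityMeasure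
              (μ.map (fun (b : ℕ → Bool) (j:ℕ) => b (2*j+1 + (k+1)))) :=
            Measure.isProbabilityMeasure_map (measurable_remap _).aemeasurable
          have hb1 := ih ((m+1)/2) (by omega) (μ.map (fun (b : ℕ → Bool) (j:ℕ) => b (2*j + (k+1))))
            i1 (isBern_map hμ _ hf1) (t-(k+1))
          have hb2 := ih (m/2) (by omega) (μ.map (fun (b : ℕ → Bool) (j:ℕ) => b (2*j+1 + (k+1))))
            i2 (isBern_map hμ _ hf2) (t-(k+1))
          have hq1 : ((((m+1)/2 : ℕ)):ℝ) * qf p (Nat.clog 2 ((m+1)/2+1)) (t-(k+1)) ≤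
              ((((m+1)/2 : ℕ)):ℝ) * qf p d' (t-(k+1)) :=
            mul_le_mul_of_nonneg_left (qf_le_of_le hp0 hp1 hclog1 _) (Nat.cast_nonneg _)
          have hq2 : (((m/2 : ℕ)):ℝ) * qf p (Nat.clog 2 (m/2+1)) (t-(k+1)) ≤
              (((m/2 : ℕ)):ℝ) * qf p d' (t-(k+1)) :=
            mul_le_mul_of_nonneg_left (qf_le_of_le hp0 hp1 hclog2 _) (Nat.cast_nonneg _)
          have key1 : μ (firstT k ∩ (fun (b : ℕ → Bool) (j : ℕ) => b (2*j + (k+1))) ⁻¹'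
              {b | ((t - (k+1) : ℕ) : ℕ∞) < HWU ((m+1)/2) b}) ≤
              ENNReal.ofReal (p * (1-p)^k) *
                ENNReal.ofReal (((((m+1)/2 : ℕ)):ℝ) * qf p d' (t-(k+1))) := by
            rw [hs1, e0]
            exact mul_le_mul_right (hb1.trans (ENNReal.ofReal_le_ofReal hq1)) _
          have key2 : μ (firstT k ∩ (fun (b : ℕ → Bool) (j : ℕ) => b (2*j+1 + (k+1))) ⁻¹'
              {b | ((t - (k+1) : ℕ) : ℕ∞) < HWU (m/2) b}) ≤
              ENNReal.ofReal (p * (1-p)^k) *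
                ENNReal.ofReal ((((m/2 : ℕ)):ℝ) * qf p d' (t-(k+1))) := by
            rw [hs2, e0]
            exact mul_le_mul_right (hb2.trans (ENNReal.ofReal_le_ofReal hq2)) _
          refine (add_le_add key1 key2).trans ?_
          rw [← mul_add, ← ENNReal.ofReal_add
              (mul_nonneg (Nat.cast_nonneg _) (qf_nonneg hp0 hp1 _ _))
              (mul_nonneg (Nat.cast_nonneg _) (qf_nonneg hp0 hp1 _ _)),
            ← ENNReal.ofReal_mul (mul_nonneg hp0.le (pow_nonneg hA k))]
          refine ENNReal.ofReal_le_ofReal ?_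
          have hmm : (((m+1)/2 : ℕ) : ℝ) + ((m/2 : ℕ) : ℝ) = (m:ℝ) := by
            rw [← Nat.cast_add]
            exact_mod_cast congrArg (Nat.cast (R := ℝ)) (by omega : (m+1)/2 + m/2 = m)
          have htk : t - (k+1) = t-1-k := by omega
          rw [htk] at *
          have : (((m+1)/2 : ℕ) : ℝ) * qf p d' (t-1-k) + ((m/2 : ℕ) : ℝ) * qf p d' (t-1-k)
              = (m:ℝ) * qf p d' (t-1-k) := by
            rw [← hmm]; ring
          rw [this]
        · rw [if_neg hkt, hBdef]
          simp only [if_neg hkt]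
          rw [Set.inter_univ]
          exact le_of_eq e0
      have hq0 : (0:ℝ) ≤ qf p d' 0 := qf_nonneg hp0 hp1 _ _
      calc μ {b | ((t:ℕ) : ℕ∞) < HWU (m+1) b}
          = μ ({b : ℕ → Bool | ∀ k, b k = false} ∪ ⋃ k, (firstT k ∩ (if k + 1 ≤ t then
              ((fun (b : ℕ → Bool) (j : ℕ) => b (2*j + (k+1))) ⁻¹'
                  {b | ((t - (k+1) : ℕ) : ℕ∞) < HWU ((m+1)/2) b} ∪
               (fun (b : ℕ → Bool) (j : ℕ) => b (2*j+1 + (k+1))) ⁻¹'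
                  {b | ((t - (k+1) : ℕ) : ℕ∞) < HWU (m/2) b})
            else Set.univ))) := by rw [HWU_gt_set_eq]
        _ ≤ μ {b : ℕ → Bool | ∀ k, b k = false} + μ (⋃ k, (firstT k ∩ (if k + 1 ≤ t then
              ((fun (b : ℕ → Bool) (j : ℕ) => b (2*j + (k+1))) ⁻¹'
                  {b | ((t - (k+1) : ℕ) : ℕ∞) < HWU ((m+1)/2) b} ∪
               (fun (b : ℕ → Bool) (j : ℕ) => b (2*j+1 + (k+1))) ⁻¹'
                  {b | ((t - (k+1) : ℕ) : ℕ∞) < HWU (m/2) b})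
            else Set.univ))) := measure_union_le _ _
        _ ≤ 0 + ∑' k, μ (firstT k ∩ (if k + 1 ≤ t then
              ((fun (b : ℕ → Bool) (j : ℕ) => b (2*j + (k+1))) ⁻¹'
                  {b | ((t - (k+1) : ℕ) : ℕ∞) < HWU ((m+1)/2) b} ∪
               (fun (b : ℕ → Bool) (j : ℕ) => b (2*j+1 + (k+1))) ⁻¹'
                  {b | ((t - (k+1) : ℕ) : ℕ∞) < HWU (m/2) b})
            else Set.univ)) := add_le_add hnull.le (measure_iUnion_le _)
        _ = ∑' k, μ (firstT k ∩ _) := by rw [zero_add]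
        _ ≤ ∑' k, B k := ENNReal.tsum_le_tsum hterm
        _ = (∑ k ∈ Finset.range t, B k) + ∑' k, B (k + t) :=
            (Summable.sum_add_tsum_nat_add' (f := B) (k := t) ENNReal.summable).symm
        _ ≤ ENNReal.ofReal ((↑(m+1) : ℝ) * qf p (Nat.clog 2 (m+1+1)) t) := by
          have hsum1 : (∑ k ∈ Finset.range t, B k) =
              ENNReal.ofReal (∑ k ∈ Finset.range t, p * (1-p)^k * ((m:ℝ) * qf p d' (t-1-k))) := by
            rw [ENNReal.ofReal_sum_of_nonneg (fun k _ => by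
              have := qf_nonneg hp0 hp1 d' (t-1-k); positivity)]
            refine Finset.sum_congr rfl fun k hk => ?_
            rw [hBdef]
            simp only [if_pos (Nat.succ_le_of_lt (Finset.mem_range.mp hk))]
          have hsummable : Summable (fun k => p * (1-p)^(k+t)) := by
            refine Summable.congr ((summable_geometric_of_lt_one hA (by linarith)).mul_left
              (p * (1-p)^t)) fun k => ?_
            rw [pow_add]; ring
          have hsum2 : (∑' k, B (k + t)) = ENNReal.ofReal ((1-p)^t) := by
            have hb : ∀ k : ℕ, B (k + t) = ENNReal.ofReal (p * (1-p)^(k+t)) := by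
              intro k
              rw [hBdef]
              simp only [if_neg (by omega : ¬ (k + t + 1 ≤ t))]
            rw [tsum_congr hb, ← ENNReal.ofReal_tsum_of_nonneg
              (fun k => by positivity) hsummable]
            congr 1
            have e1 : (∑' k : ℕ, p * (1-p)^(k+t)) = (p * (1-p)^t) * ∑' k : ℕ, (1-p)^k := by
              rw [← tsum_mul_left]
              refine tsum_congr fun k => ?_
              rw [pow_add]; ring
            rw [e1, tsum_geometric_of_lt_one hA (by linarith)]
            have : 1 - (1-p) = p := by ring
            rw [this]
            field_simp
          rw [hsum1, hsum2, ← ENNReal.ofReal_add (Finset.sum_nonneg fun k _ => by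
              have := qf_nonneg hp0 hp1 d' (t-1-k); positivity) (by positivity)]
          refine ENNReal.ofReal_le_ofReal ?_
          have hqrec : qf p (d'+1) t =
              (∑ k ∈ Finset.range t, p * (1-p)^k * qf p d' (t-1-k)) + (1-p)^t := by rw [qf]
          have hS : (0:ℝ) ≤ ∑ k ∈ Finset.range t, p * (1-p)^k * qf p d' (t-1-k) :=
            Finset.sum_nonneg fun k _ => by
              have := qf_nonneg hp0 hp1 d' (t-1-k); positivity
          have e2 : ∑ k ∈ Finset.range t, p * (1-p)^k * ((m:ℝ) * qf p d' (t-1-k))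
              = (m:ℝ) * ∑ k ∈ Finset.range t, p * (1-p)^k * qf p d' (t-1-k) := by
            rw [Finset.mul_sum]
            exact Finset.sum_congr rfl fun k _ => by ring
          have hDrw : Nat.clog 2 (m+1+1) = d' + 1 := by
            show Nat.clog 2 (m+2) = d' + 1
            omega
          rw [hDrw, hqrec, e2]
          have hmnn : (0:ℝ) ≤ (m:ℝ) := Nat.cast_nonneg m
          have hpt : (0:ℝ) ≤ (1-p)^t := pow_nonneg hA t
          push_cast
          nlinarith

/-- Runtime of the WU algorithm under random failures: if each request succeeds
independently with probability `p` (i.e. `μ` is the i.i.d. Bernoulli(p) product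
measure on `ℕ → Bool`), then the probability that the WU algorithm on `n`
processors (one informed, `n-1` uninformed) runs longer than
`(c/p)(⌈log₂(n-1)⌉+1)` rounds is at most
`n · exp(-((c-1)²/(2c))(⌈log₂(n-1)⌉-1))`. -/
theorem wu_random_failures (n : ℕ) (hn : 2 ≤ n) (c : ℝ) (hc : 1 < c)
    (p : ℝ) (hp0 : 0 < p) (hp1 : p < 1)
    (μ : Measure (ℕ → Bool)) [IsProbabilityMeasure μ]
    (hμ : ∀ (s : Finset ℕ) (v : ℕ → Bool),
      μ {b | ∀ i ∈ s, b i = v i} =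
        ∏ i ∈ s, (if v i then ENNReal.ofReal p else ENNReal.ofReal (1 - p))) :
    μ {b | ENNReal.ofReal (c / p * ((Nat.clog 2 (n-1) : ℝ) + 1)) < (HWU (n-1) b : ℝ≥0∞)} ≤
      ENNReal.ofReal ((n : ℝ) *
        Real.exp (-((c-1)^2 / (2*c)) * ((Nat.clog 2 (n-1) : ℝ) - 1))) := by
  have hbern : IsBern p μ := fun s v => hμ s v
  set m := n - 1 with hmdef
  have hm1 : 1 ≤ m := by omega
  set L := Nat.clog 2 m with hLdef
  set x := c / p * ((L : ℝ) + 1) with hxdef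
  have hx0 : 0 ≤ x := by
    have : 0 < c / p := div_pos (by linarith) hp0
    have : (0:ℝ) < (L:ℝ) + 1 := by positivity
    positivity
  set t := ⌊x⌋₊ with htdef
  have hsub : {b : ℕ → Bool | ENNReal.ofReal x < (HWU m b : ℝ≥0∞)} ⊆
      {b : ℕ → Bool | ((t:ℕ) : ℕ∞) < HWU m b} := by
    intro b hb
    simp only [Set.mem_setOf_eq] at hb ⊢
    cases hH : HWU m b with
    | top => exact lt_top_iff_ne_top.mpr (ENat.coe_ne_top t)
    | coe N =>
      rw [hH] at hb
      have hb' : ENNReal.ofReal x < (N : ℝ≥0∞) := by simpa using hb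
      have hxN : x < (N : ℝ) := by
        by_contra hcon
        push_neg at hcon
        have : (N : ℝ≥0∞) ≤ ENNReal.ofReal x := by
          rw [← ENNReal.ofReal_natCast N]
          exact ENNReal.ofReal_le_ofReal hcon
        exact absurd hb' (not_lt.mpr this)
      have htN : t < N := by
        rw [htdef]
        exact (Nat.floor_lt hx0).mpr hxN
      exact_mod_cast (by exact_mod_cast htN : ((t:ℕ):ℕ∞) < ((N:ℕ):ℕ∞))
  have hmain := HWU_tail_bound hp0 hp1 m μ inferInstance hbern t
  refine (measure_mono hsub).trans (hmain.trans (ENNReal.ofReal_le_ofReal ?_))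
  -- real inequality
  have hclogm : Nat.clog 2 (m+1) ≤ L + 1 := by
    have h1 : Nat.clog 2 (m+1) ≤ Nat.clog 2 (2*m) := Nat.clog_mono_right _ (by omega)
    have h2 : Nat.clog 2 (2*m) = Nat.clog 2 m + 1 := by
      rw [Nat.clog_of_two_le one_lt_two (by omega)]
      have e : (2*m+2-1)/2 = m := by omega
      rw [e]
    omega
  have hq1 : qf p (Nat.clog 2 (m+1)) t ≤ qf p (L+1) t := qf_le_of_le hp0 hp1 hclogm t
  have hD1 : 1 ≤ L + 1 := by omega
  have ht : (c/p) * ((L+1 : ℕ) : ℝ) - 1 ≤ (t:ℝ) := by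
    have h1 : x - 1 < (t:ℝ) := by
      rw [htdef]
      exact Nat.sub_one_lt_floor x
    have e : (c/p) * ((L+1 : ℕ) : ℝ) = x := by
      rw [hxdef]; push_cast; ring
    linarith
  have hq2 := qf_final_bound hp0 hp1 hc (L+1) t hD1 ht
  have he : -((c-1)^2/(2*c)) * (((L+1 : ℕ):ℝ) - 2) = -((c-1)^2/(2*c)) * ((L:ℝ) - 1) := by
    push_cast; ring
  rw [he] at hq2
  have hqnn : 0 ≤ qf p (Nat.clog 2 (m+1)) t := qf_nonneg hp0 hp1 _ _
  have hmn : (m:ℝ) ≤ (n:ℝ) := by exact_mod_cast (by omega : m ≤ n)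
  have hexp0 : 0 < Real.exp (-((c-1)^2/(2*c)) * ((L:ℝ) - 1)) := Real.exp_pos _
  calc (m:ℝ) * qf p (Nat.clog 2 (m+1)) t
      ≤ (m:ℝ) * Real.exp (-((c-1)^2/(2*c)) * ((L:ℝ) - 1)) :=
        mul_le_mul_of_nonneg_left (hq1.trans hq2) (Nat.cast_nonneg m)
    _ ≤ (n:ℝ) * Real.exp (-((c-1)^2/(2*c)) * ((L:ℝ) - 1)) :=
        mul_le_mul_of_nonneg_right hmn hexp0.le
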